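/- Given f₁, f₂ ∈ L^1[0,1] with f₁(x) > 0 for almost all x, and given an integer k ≥ 2, there exist points 0 ≤ x₁ ≤ x₂ ≤ 1 such that ∫_{x₁}^{x₂} fᵢ(t) dt = (1/k) ∫₀¹ fᵢ(t) dt for i = 1, 2. -/

import Mathlib

open MeasureTheory Set

theorem stmt_1 (f₁ f₂ : ℝ → ℝ) (hf₁ : IntegrableOn f₁ (Set.Icc 0 1))
    (hf₂ : IntegrableOn f₂ (Set.Icc 0 1))
    (hpos : ∀ᵐ t ∂(volume.restrict (Set.Icc (0:ℝ) 1)), 0 < f₁ t)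
    (k : ℕ) (hk : 2 ≤ k) :
    ∃ x₁ x₂ : ℝ, 0 ≤ x₁ ∧ x₁ ≤ x₂ ∧ x₂ ≤ 1 ∧
      (∫ t in x₁..x₂, f₁ t) = (1 / k) * ∫ t in (0:ℝ)..1, f₁ t ∧
      (∫ t in x₁..x₂, f₂ t) = (1 / k) * ∫ t in (0:ℝ)..1, f₂ t := by
  have hk0 : (0:ℝ) < (k:ℝ) := by
    have : (0:ℕ) < k := by omega
    exact_mod_cast this
  -- general facts about primitives
  have hII : ∀ f : ℝ → ℝ, IntegrableOn f (Icc 0 1) → ∀ a b : ℝ, a ∈ Icc (0:ℝ) 1 →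
      b ∈ Icc (0:ℝ) 1 → IntervalIntegrable f volume a b := by
    intro f hf a b ha hb
    apply IntegrableOn.intervalIntegrable
    apply hf.mono_set
    rw [← uIcc_of_le (zero_le_one)]
    exact uIcc_subset_uIcc (by simpa using ha) (by simpa using hb)
  have hadd : ∀ f : ℝ → ℝ, IntegrableOn f (Icc 0 1) → ∀ a b : ℝ, a ∈ Icc (0:ℝ) 1 →
      b ∈ Icc (0:ℝ) 1 →
      (∫ t in a..b, f t) = (∫ t in (0:ℝ)..b, f t) - (∫ t in (0:ℝ)..a, f t) := by
    intro f hf a b ha hb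
    rw [intervalIntegral.integral_interval_sub_left (hII f hf 0 b (by simp) hb)
      (hII f hf 0 a (by simp) ha)]
  have hcont : ∀ f : ℝ → ℝ, IntegrableOn f (Icc 0 1) →
      ContinuousOn (fun x => ∫ t in (0:ℝ)..x, f t) (Icc 0 1) := by
    intro f hf
    have := intervalIntegral.continuousOn_primitive_interval (a := 0) (b := 1) (μ := volume)
      (f := f) (by rwa [uIcc_of_le zero_le_one])
    rwa [uIcc_of_le zero_le_one] at this
  set F : ℝ → ℝ := fun x => ∫ t in (0:ℝ)..x, f₁ t with hFdef
  set G : ℝ → ℝ := fun x => ∫ t in (0:ℝ)..x, f₂ t with hGdef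
  -- positivity of integrals of f₁
  have hposint : ∀ a b : ℝ, 0 ≤ a → a < b → b ≤ 1 → 0 < ∫ t in a..b, f₁ t := by
    intro a b ha hab hb
    have hsub : Ioc a b ⊆ Icc (0:ℝ) 1 := fun x hx => ⟨ha.trans hx.1.le, hx.2.trans hb⟩
    have hae : ∀ᵐ t ∂(volume.restrict (Ioc a b)), 0 < f₁ t :=
      ae_restrict_of_ae_restrict_of_subset hsub hpos
    have hint : IntegrableOn f₁ (Ioc a b) := hf₁.mono_set hsub
    rw [intervalIntegral.integral_of_le hab.le]
    rw [setIntegral_pos_iff_support_of_nonneg_ae (hae.mono fun x hx => hx.le) hint]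
    have hsupp : ∀ᵐ t ∂(volume.restrict (Ioc a b)), t ∈ Function.support f₁ :=
      hae.mono fun x hx => ne_of_gt hx
    rw [← Measure.restrict_apply' measurableSet_Ioc]
    by_contra hle
    push_neg at hle
    have h0 : (volume.restrict (Ioc a b)) (Function.support f₁) = 0 :=
      le_antisymm hle zero_le
    have hc : (volume.restrict (Ioc a b)) (Function.support f₁)ᶜ = 0 := ae_iff.mp hsupp
    have huniv : (volume.restrict (Ioc a b)) Set.univ = 0 := by
      rw [← Set.union_compl_self (Function.support f₁)]
      exact le_antisymm ((measure_union_le _ _).trans (by simp [h0, hc])) zero_le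
    rw [Measure.restrict_apply_univ] at huniv
    simp [Real.volume_Ioc] at huniv
    linarith
  have hFmono : StrictMonoOn F (Icc 0 1) := by
    intro a ha b hb hab
    have : 0 < F b - F a := by
      rw [← hadd f₁ hf₁ a b ha hb]
      exact hposint a b ha.1 hab hb.2
    linarith
  have hF0 : F 0 = 0 := intervalIntegral.integral_same
  have hG0 : G 0 = 0 := intervalIntegral.integral_same
  set T : ℝ := F 1 with hTdef
  have hT : 0 < T := by
    rw [hTdef, hFdef]
    exact hposint 0 1 le_rfl one_pos le_rfl
  have hFmem : ∀ x : Icc (0:ℝ) 1, F x ∈ Icc (0:ℝ) T := by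
    intro x
    constructor
    · rcases eq_or_lt_of_le x.2.1 with h | h
      · simp [← h, hF0]
      · have := hFmono ⟨le_rfl, zero_le_one⟩ x.2 h
        simpa [hF0] using this.le
    · rcases eq_or_lt_of_le x.2.2 with h | h
      · simp [h, hTdef]
      · exact (hFmono x.2 ⟨zero_le_one, le_rfl⟩ h).le
  set Fm : Icc (0:ℝ) 1 → Icc (0:ℝ) T := fun x => ⟨F x, hFmem x⟩ with hFmdef
  have hFmmono : StrictMono Fm := fun a b hab => by
    exact Subtype.mk_lt_mk.mpr (hFmono a.2 b.2 (Subtype.coe_lt_coe.mpr hab))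
  have hFmsurj : Function.Surjective Fm := by
    intro y
    have hy : (y:ℝ) ∈ Icc (F 0) (F 1) := by
      rw [hF0]; exact y.2
    obtain ⟨x, hx, hfx⟩ := intermediate_value_Icc zero_le_one (hcont f₁ hf₁) hy
    exact ⟨⟨x, hx⟩, Subtype.ext hfx⟩
  set e : Icc (0:ℝ) 1 ≃o Icc (0:ℝ) T := StrictMono.orderIsoOfSurjective Fm hFmmono hFmsurj
    with hedef
  have hecoe : ∀ x, (e x : ℝ) = F x := fun x => rfl
  -- inverse map
  set U : ℝ → ℝ := fun y => (e.symm (projIcc 0 T hT.le y) : ℝ) with hUdef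
  have hUcont : Continuous U := by
    exact continuous_subtype_val.comp (e.symm.continuous.comp (continuous_projIcc))
  have hU01 : ∀ y, U y ∈ Icc (0:ℝ) 1 := fun y => (e.symm (projIcc 0 T hT.le y)).2
  have hUmono : Monotone U := fun a b hab => by
    exact Subtype.coe_le_coe.mpr (e.symm.monotone (monotone_projIcc hT.le hab))
  have hFU : ∀ y ∈ Icc (0:ℝ) T, F (U y) = y := by
    intro y hy
    have h1 : projIcc 0 T hT.le y = ⟨y, hy⟩ := projIcc_of_mem hT.le hy
    rw [hUdef]
    simp only [h1]
    have := e.apply_symm_apply ⟨y, hy⟩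
    calc F ((e.symm ⟨y, hy⟩ : Icc (0:ℝ) 1) : ℝ) = (e (e.symm ⟨y, hy⟩) : ℝ) := rfl
      _ = y := by rw [this]
  -- Phi
  set Φ : ℝ → ℝ := fun y => G (U y) with hΦdef
  have hΦcont : Continuous Φ :=
    (hcont f₂ hf₂).comp_continuous hUcont hU01
  set c : ℝ := T / k with hcdef
  have hc : 0 < c := div_pos hT hk0
  set S : ℝ := G 1 with hSdef
  have hΦ0 : Φ 0 = 0 := by
    have hU0 : U 0 = 0 := by
      have h1 : e.symm (Fm ⟨0, by simp⟩) = ⟨0, by simp⟩ :=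
        StrictMono.orderIsoOfSurjective_symm_apply_self Fm hFmmono hFmsurj _
      have h2 : projIcc 0 T hT.le 0 = Fm ⟨0, by simp⟩ := by
        apply Subtype.ext
        simp [Fm, hF0, projIcc_of_mem hT.le (⟨le_rfl, hT.le⟩ : (0:ℝ) ∈ Icc (0:ℝ) T)]
      rw [hUdef]; simp only [h2, h1]
    rw [hΦdef]; simp only [hU0, hG0]
  have hΦT : Φ T = S := by
    have hUT : U T = 1 := by
      have h1 : e.symm (Fm ⟨1, by simp⟩) = ⟨1, by simp⟩ :=
        StrictMono.orderIsoOfSurjective_symm_apply_self Fm hFmmono hFmsurj _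
      have h2 : projIcc 0 T hT.le T = Fm ⟨1, by simp⟩ := by
        apply Subtype.ext
        simp [Fm, ← hTdef, projIcc_of_mem hT.le (⟨hT.le, le_rfl⟩ : T ∈ Icc (0:ℝ) T)]
      rw [hUdef]; simp only [h2, h1]
    rw [hΦdef]; simp only [hUT, hSdef]
  -- telescoping sum
  set ψ : ℝ → ℝ := fun y => Φ (y + c) - Φ y with hψdef
  have hψcont : Continuous ψ := (hΦcont.comp (continuous_id.add continuous_const)).sub hΦcont
  have hkc : (k:ℝ) * c = T := by
    rw [hcdef]; field_simp
  have htel : ∑ j ∈ Finset.range k, ψ (j * c) = S := by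
    have h1 : ∀ j : ℕ, ψ (j * c) = (fun j : ℕ => Φ (j * c)) (j + 1) - (fun j : ℕ => Φ (j * c)) j := by
      intro j
      simp only [hψdef]
      congr 2
      push_cast; ring
    rw [Finset.sum_congr rfl fun j _ => h1 j, Finset.sum_range_sub (fun j : ℕ => Φ (j * c))]
    simp only [Nat.cast_zero, zero_mul, hΦ0, hkc, hΦT, sub_zero]
  have hconst : ∑ _j ∈ Finset.range k, (S / k) = S := by
    rw [Finset.sum_const, Finset.card_range, nsmul_eq_mul]
    field_simp
  have hne : (Finset.range k).Nonempty := by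
    rw [Finset.nonempty_range_iff]; omega
  obtain ⟨ja, hja, hja2⟩ : ∃ j ∈ Finset.range k, ψ (j * c) ≤ S / k := by
    apply Finset.exists_le_of_sum_le hne
    rw [htel, hconst]
  obtain ⟨jb, hjb, hjb2⟩ : ∃ j ∈ Finset.range k, S / k ≤ ψ (j * c) := by
    apply Finset.exists_le_of_sum_le hne
    rw [htel, hconst]
  -- IVT
  have hIVT := intermediate_value_uIcc (a := (ja:ℝ) * c) (b := (jb:ℝ) * c)
    (hψcont.continuousOn (s := uIcc ((ja:ℝ)*c) ((jb:ℝ)*c)))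
  have hmem : S / k ∈ uIcc (ψ ((ja:ℝ)*c)) (ψ ((jb:ℝ)*c)) := by
    rw [mem_uIcc]
    left; exact ⟨hja2, hjb2⟩
  obtain ⟨y₀, hy₀, hψy₀⟩ := hIVT hmem
  -- bounds on y₀
  have hbound : ∀ j : ℕ, j ∈ Finset.range k → (j:ℝ) * c ∈ Icc (0:ℝ) (T - c) := by
    intro j hj
    rw [Finset.mem_range] at hj
    constructor
    · positivity
    · have : (j:ℝ) ≤ (k:ℝ) - 1 := by
        have : (j:ℝ) + 1 ≤ (k:ℝ) := by exact_mod_cast hj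
        linarith
      calc (j:ℝ) * c ≤ ((k:ℝ) - 1) * c := by nlinarith
        _ = T - c := by rw [sub_mul, hkc, one_mul]
  have hy₀' : y₀ ∈ Icc (0:ℝ) (T - c) :=
    ordConnected_Icc.uIcc_subset (hbound ja hja) (hbound jb hjb) hy₀
  have hy₀T : y₀ ∈ Icc (0:ℝ) T := ⟨hy₀'.1, by linarith [hy₀'.2, hc]⟩
  have hy₀cT : y₀ + c ∈ Icc (0:ℝ) T := ⟨by linarith [hy₀'.1, hc.le], by linarith [hy₀'.2]⟩
  refine ⟨U y₀, U (y₀ + c), (hU01 y₀).1, hUmono (by linarith [hc.le]), (hU01 (y₀ + c)).2, ?_, ?_⟩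
  · rw [hadd f₁ hf₁ _ _ (hU01 y₀) (hU01 (y₀ + c))]
    have e1 : (∫ t in (0:ℝ)..(U (y₀ + c)), f₁ t) = F (U (y₀ + c)) := rfl
    have e2 : (∫ t in (0:ℝ)..(U y₀), f₁ t) = F (U y₀) := rfl
    have e3 : (∫ t in (0:ℝ)..1, f₁ t) = T := rfl
    rw [e1, e2, e3, hFU _ hy₀cT, hFU _ hy₀T]
    rw [hcdef]
    field_simp
    ring
  · rw [hadd f₂ hf₂ _ _ (hU01 y₀) (hU01 (y₀ + c))]
    have e1 : (∫ t in (0:ℝ)..(U (y₀ + c)), f₂ t) = Φ (y₀ + c) := rfl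
    have e2 : (∫ t in (0:ℝ)..(U y₀), f₂ t) = Φ y₀ := rfl
    have e3 : (∫ t in (0:ℝ)..1, f₂ t) = S := rfl
    rw [e1, e2, e3]
    have : ψ y₀ = S / k := hψy₀
    rw [hψdef] at this
    simp only at this
    rw [this]
    field_simp
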